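/- arXiv:1210.7357 — 2 statements merged into one kernel-verified Lean document; each statement's English description precedes it below -/
import Mathlib

section
/- For every positive integer N and every real t ≠ 0, ∫_0^1 ζ_w(N; c + i·t) dc = 1 + (N/(N+1))·( Ei₁(i·t·ln(N+1) − ln(N+1)) − Ei₁(i·t·ln(N+1)) ) + Σ_{n=1}^{N−1} n·(n+1)^{−i·t} / ((n+1)·ln(n+1)), where Ei₁(z) = z·∫_0^1 ∫_0^1 e^{−z·x·y} dy dx − γ − log z with log the principal branch of the complex logarithm and γ the Euler–Mascheroni constant. -/
open Complex MeasureTheory intervalIntegral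

/-- The truncated zeta function `ζ_w(N; s)`. -/
noncomputable def zetaW (N : ℕ) (s : ℂ) : ℂ :=
  (1 / (s - 1)) * ∑ n ∈ Finset.Icc 1 N,
    ((n : ℂ) * ((n : ℂ) + 1) ^ (-s) - (n : ℂ) ^ ((1 : ℂ) - s) + s * (n : ℂ) ^ (-s))

open Complex in
/-- The exponential integral `Ei₁(z) = z·∫_0^1∫_0^1 e^{-zxy} dy dx - γ - log z`. -/
noncomputable def expIntegralE1 (z : ℂ) : ℂ :=
  z * (∫ x in (0 : ℝ)..1, ∫ y in (0 : ℝ)..1, Complex.exp (-z * x * y))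
    - (Real.eulerMascheroniConstant : ℂ) - Complex.log z

lemma helper_int_exp (w : ℂ) (hw : w ≠ 0) :
    (∫ x in (0:ℝ)..1, Complex.exp (w * x)) = (Complex.exp w - 1) / w := by
  simpa using integral_exp_mul_complex (a := 0) (b := 1) hw

lemma swap01 (f : ℝ → ℝ → ℂ) (hf : Continuous (Function.uncurry f)) :
    (∫ x in (0:ℝ)..1, ∫ y in (0:ℝ)..1, f x y) = ∫ y in (0:ℝ)..1, ∫ x in (0:ℝ)..1, f x y := by
  have h01 : (0:ℝ) ≤ 1 := zero_le_one
  rw [integral_of_le h01, integral_of_le h01]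
  simp_rw [integral_of_le h01]
  apply MeasureTheory.integral_integral_swap
  rw [Measure.prod_restrict]
  apply (hf.continuousOn.integrableOn_compact (isCompact_Icc (a := ((0:ℝ),(0:ℝ))) (b := (1,1)))).mono_set
  rw [Set.Icc_prod_eq]
  exact Set.prod_mono Set.Ioc_subset_Icc_self Set.Ioc_subset_Icc_self

lemma Ei_diff (t L : ℝ) (ht : t ≠ 0) (hL : 0 < L) :
    expIntegralE1 (I * t * L - L) - expIntegralE1 (I * t * L)
      = ∫ u in (0:ℝ)..1,
          (L:ℂ) * Complex.exp ((u:ℂ) * L - I * t * L) / (I * t * L - (u:ℂ) * L) := by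
  set a : ℂ := I * t * L with ha_def
  set b : ℂ := I * t * L - L with hb_def
  have hLne : (L:ℂ) ≠ 0 := by exact_mod_cast hL.ne'
  have haim : a.im = t * L := by simp [ha_def]
  have hbim : b.im = t * L := by simp [hb_def]
  have htL : t * L ≠ 0 := mul_ne_zero ht hL.ne'
  have ha : a ≠ 0 := fun h => htL (by rw [← haim, h, Complex.zero_im])
  have hb : b ≠ 0 := fun h => htL (by rw [← hbim, h, Complex.zero_im])
  have hkey : ∀ v : ℝ, (v:ℂ) * L - a ≠ 0 := by
    intro v h
    have h2 : ((v:ℂ) * L - a).im = -(t * L) := by simp [ha_def]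
    rw [h, Complex.zero_im] at h2
    exact htL (neg_eq_zero.mp h2.symm)
  have hkey2 : ∀ v : ℝ, a - (v:ℂ) * L ≠ 0 := by
    intro v h
    have := hkey v
    rw [← neg_sub] at h
    exact this (neg_eq_zero.mp h)
  -- continuity of the parametric inner integral
  have hQcont : ∀ z : ℂ, Continuous (fun x : ℝ => z * ∫ y in (0:ℝ)..1, Complex.exp (-z * x * y)) := by
    intro z
    apply continuous_const.mul
    apply intervalIntegral.continuous_parametric_intervalIntegral_of_continuous'
    have : Continuous (Function.uncurry fun (x y : ℝ) => Complex.exp (-z * x * y)) := by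
      apply Complex.continuous_exp.comp
      exact (continuous_const.mul (Complex.continuous_ofReal.comp continuous_fst)).mul
        (Complex.continuous_ofReal.comp continuous_snd)
    exact this
  have hT : ∀ z : ℂ, z * (∫ x in (0:ℝ)..1, ∫ y in (0:ℝ)..1, Complex.exp (-z * x * y))
      = ∫ x in (0:ℝ)..1, z * ∫ y in (0:ℝ)..1, Complex.exp (-z * x * y) :=
    fun z => (intervalIntegral.integral_const_mul _ _).symm
  -- the difference of the double integrals as a single double integral
  have hstep1 :
      b * (∫ x in (0:ℝ)..1, ∫ y in (0:ℝ)..1, Complex.exp (-b * x * y))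
        - a * (∫ x in (0:ℝ)..1, ∫ y in (0:ℝ)..1, Complex.exp (-a * x * y))
      = ∫ x in (0:ℝ)..1, ∫ v in (0:ℝ)..1, -((L:ℂ) * Complex.exp (((v:ℂ) * L - a) * x)) := by
    rw [hT, hT, ← intervalIntegral.integral_sub ((hQcont b).intervalIntegrable 0 1)
      ((hQcont a).intervalIntegrable 0 1)]
    apply intervalIntegral.integral_congr_ae
    apply MeasureTheory.ae_of_all
    intro x hx
    have hx0 : x ≠ 0 := by
      have := hx.1
      rw [min_eq_left zero_le_one] at this
      exact ne_of_gt this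
    have hxC : (x:ℂ) ≠ 0 := by exact_mod_cast hx0
    have hinner : ∀ z : ℂ, z ≠ 0 → (∫ y in (0:ℝ)..1, Complex.exp (-z * x * y))
        = (Complex.exp (-z * x) - 1) / (-z * x) := by
      intro z hz
      have : ∀ y : ℝ, -z * x * y = (-z * x) * y := fun y => by ring
      rw [show (fun y : ℝ => Complex.exp (-z * ↑x * ↑y)) = fun y : ℝ => Complex.exp ((-z * ↑x) * ↑y) from rfl]
      exact helper_int_exp (-z * x) (mul_ne_zero (neg_ne_zero.mpr hz) hxC)
    have hrhs : (∫ v in (0:ℝ)..1, -((L:ℂ) * Complex.exp (((v:ℂ) * L - a) * x)))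
        = -((L:ℂ) * Complex.exp (-a * x)) * ((Complex.exp ((L:ℂ) * x) - 1) / ((L:ℂ) * x)) := by
      have : ∀ v : ℝ, -((L:ℂ) * Complex.exp (((v:ℂ) * L - a) * x))
          = (-((L:ℂ) * Complex.exp (-a * x))) * Complex.exp (((L:ℂ) * x) * v) := by
        intro v
        rw [show ((v:ℂ) * L - a) * x = -a * x + ((L:ℂ) * x) * v by ring, Complex.exp_add]
        ring
      simp_rw [this]
      rw [intervalIntegral.integral_const_mul, helper_int_exp _ (mul_ne_zero hLne hxC)]
    rw [hinner b hb, hinner a ha, hrhs]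
    have hexpb : Complex.exp (-b * x) = Complex.exp (-a * x) * Complex.exp ((L:ℂ) * x) := by
      rw [← Complex.exp_add]
      congr 1
      rw [hb_def, ha_def]
      ring
    rw [hexpb]
    field_simp
    ring
  -- Fubini swap
  have hswap : (∫ x in (0:ℝ)..1, ∫ v in (0:ℝ)..1, -((L:ℂ) * Complex.exp (((v:ℂ) * L - a) * x)))
      = ∫ v in (0:ℝ)..1, ∫ x in (0:ℝ)..1, -((L:ℂ) * Complex.exp (((v:ℂ) * L - a) * x)) := by
    apply swap01
    apply Continuous.neg
    apply continuous_const.mul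
    apply Complex.continuous_exp.comp
    apply Continuous.mul
    · exact (Complex.continuous_ofReal.comp continuous_snd).mul continuous_const |>.sub continuous_const
    · exact Complex.continuous_ofReal.comp continuous_fst
  -- evaluate the inner integral in x
  have hinner2 : ∀ v : ℝ, (∫ x in (0:ℝ)..1, -((L:ℂ) * Complex.exp (((v:ℂ) * L - a) * x)))
      = (L:ℂ) * Complex.exp ((v:ℂ) * L - a) / (a - (v:ℂ) * L) + (L:ℂ) / ((v:ℂ) * L - a) := by
    intro v
    have h1 : ∀ x : ℝ, -((L:ℂ) * Complex.exp (((v:ℂ) * L - a) * x))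
        = (-(L:ℂ)) * Complex.exp (((v:ℂ) * L - a) * x) := fun x => by ring
    simp_rw [h1]
    rw [intervalIntegral.integral_const_mul, helper_int_exp _ (hkey v),
      show a - (v:ℂ) * L = -((v:ℂ) * L - a) by ring, div_neg]
    field_simp
    ring
  have hcont1 : Continuous (fun v : ℝ => (L:ℂ) * Complex.exp ((v:ℂ) * L - a) / (a - (v:ℂ) * L)) := by
    apply Continuous.div
    · exact continuous_const.mul (Complex.continuous_exp.comp
        (((Complex.continuous_ofReal).mul continuous_const).sub continuous_const))
    · exact continuous_const.sub ((Complex.continuous_ofReal).mul continuous_const)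
    · exact hkey2
  have hcont2 : Continuous (fun v : ℝ => (L:ℂ) / ((v:ℂ) * L - a)) := by
    apply continuous_const.div
    · exact ((Complex.continuous_ofReal).mul continuous_const).sub continuous_const
    · exact hkey
  have hsplit : (∫ v in (0:ℝ)..1,
        ((L:ℂ) * Complex.exp ((v:ℂ) * L - a) / (a - (v:ℂ) * L) + (L:ℂ) / ((v:ℂ) * L - a)))
      = (∫ v in (0:ℝ)..1, (L:ℂ) * Complex.exp ((v:ℂ) * L - a) / (a - (v:ℂ) * L))
        + ∫ v in (0:ℝ)..1, (L:ℂ) / ((v:ℂ) * L - a) :=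
    intervalIntegral.integral_add (hcont1.intervalIntegrable 0 1) (hcont2.intervalIntegrable 0 1)
  -- the log integral
  have hB : (∫ v in (0:ℝ)..1, (L:ℂ) / ((v:ℂ) * L - a))
      = Complex.log (-b) - Complex.log (-a) := by
    have hderiv : ∀ v ∈ Set.uIcc (0:ℝ) 1,
        HasDerivAt (fun v : ℝ => Complex.log ((v:ℂ) * L - a)) ((L:ℂ) / ((v:ℂ) * L - a)) v := by
      intro v hv
      have hmem : ((v:ℂ) * L - a) ∈ Complex.slitPlane := by
        rw [Complex.mem_slitPlane_iff]
        right
        have : ((v:ℂ) * L - a).im = -(t * L) := by simp [ha_def]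
        rw [this]
        exact neg_ne_zero.mpr htL
      have h1 : HasDerivAt (fun z : ℂ => z * L - a) ((L:ℂ)) ((v:ℝ):ℂ) := by
        simpa using ((hasDerivAt_id ((v:ℝ):ℂ)).mul_const (L:ℂ)).sub_const a
      have h2 := h1.comp_ofReal
      have h3 := (Complex.hasDerivAt_log hmem).comp v h2
      have h4 : ((v:ℂ) * L - a)⁻¹ * L = (L:ℂ) / ((v:ℂ) * L - a) := by
        rw [div_eq_mul_inv, mul_comm]
      rw [← h4]
      exact h3
    have heval := intervalIntegral.integral_eq_sub_of_hasDerivAt hderiv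
      (hcont2.intervalIntegrable 0 1)
    rw [heval]
    simp only [Complex.ofReal_one, Complex.ofReal_zero, one_mul, zero_mul, zero_sub]
    rw [show (L:ℂ) - a = -b by rw [hb_def]; ring]
  -- cancellation of logs
  have hcancel : Complex.log (-b) - Complex.log b = Complex.log (-a) - Complex.log a := by
    rcases lt_or_gt_of_ne htL with h|h
    · have h1 := Complex.arg_neg_eq_arg_add_pi_of_im_neg (by rw [hbim]; exact h)
      have h2 := Complex.arg_neg_eq_arg_add_pi_of_im_neg (by rw [haim]; exact h)
      apply Complex.ext
      · simp [Complex.sub_re, Complex.log_re, map_neg_eq_map]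
      · simp [Complex.sub_im, Complex.log_im, h1, h2]
    · have h1 := Complex.arg_neg_eq_arg_sub_pi_of_im_pos (by rw [hbim]; exact h)
      have h2 := Complex.arg_neg_eq_arg_sub_pi_of_im_pos (by rw [haim]; exact h)
      apply Complex.ext
      · simp [Complex.sub_re, Complex.log_re, map_neg_eq_map]
      · simp [Complex.sub_im, Complex.log_im, h1, h2]
  -- assemble
  have hmain : expIntegralE1 b - expIntegralE1 a
      = (b * (∫ x in (0:ℝ)..1, ∫ y in (0:ℝ)..1, Complex.exp (-b * x * y))
          - a * (∫ x in (0:ℝ)..1, ∫ y in (0:ℝ)..1, Complex.exp (-a * x * y)))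
        - (Complex.log b - Complex.log a) := by
    unfold expIntegralE1
    ring
  rw [hmain, hstep1, hswap, intervalIntegral.integral_congr (fun v _ => hinner2 v), hsplit, hB]
  have : Complex.log (-b) - Complex.log (-a) - (Complex.log b - Complex.log a) = 0 := by
    rw [sub_eq_zero]
    have := hcancel
    linear_combination hcancel
  linear_combination (∫ v in (0:ℝ)..1, (L:ℂ) * Complex.exp ((v:ℂ) * L - a) / (a - (v:ℂ) * L)) * (0:ℂ) + this


lemma zsum (N : ℕ) (s : ℂ) :
    ∑ n ∈ Finset.Icc 1 N,
        ((n : ℂ) * ((n : ℂ) + 1) ^ (-s) - (n : ℂ) ^ ((1 : ℂ) - s) + s * (n : ℂ) ^ (-s))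
      = (s - 1) * (∑ n ∈ Finset.Icc 1 N, (n : ℂ) ^ (-s)) + (N : ℂ) * ((N : ℂ) + 1) ^ (-s) := by
  induction N with
  | zero => simp
  | succ N ih =>
    rw [Finset.sum_Icc_succ_top (by omega : 1 ≤ N + 1), Finset.sum_Icc_succ_top (by omega : 1 ≤ N + 1), ih]
    have h0 : ((N : ℂ) + 1) ≠ 0 := Nat.cast_add_one_ne_zero N
    have hx : ((N : ℂ) + 1) ^ ((1 : ℂ) - s) = ((N : ℂ) + 1) * ((N : ℂ) + 1) ^ (-s) := by
      rw [show (1 : ℂ) - s = 1 + (-s) by ring, Complex.cpow_add _ _ h0, Complex.cpow_one]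
    push_cast
    rw [hx]
    ring

lemma zetaW_eq (N : ℕ) (s : ℂ) (hs : s ≠ 1) :
    zetaW N s = (∑ n ∈ Finset.Icc 1 N, (n : ℂ) ^ (-s)) + (N : ℂ) * ((N : ℂ) + 1) ^ (-s) / (s - 1) := by
  have h1 : s - 1 ≠ 0 := sub_ne_zero.mpr hs
  unfold zetaW
  rw [zsum]
  field_simp

lemma termInt (n : ℕ) (hn : 2 ≤ n) (t : ℝ) :
    (∫ c in (0:ℝ)..1, (n : ℂ) ^ (-((c : ℂ) + I * t)))
      = ((n : ℂ) - 1) * (n : ℂ) ^ (-(I * (t : ℂ))) / ((n : ℂ) * ((Real.log n : ℝ) : ℂ)) := by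
  have hn1 : (1:ℝ) < (n:ℝ) := by exact_mod_cast hn.trans_lt' one_lt_two
  have hn0 : (0:ℝ) < (n:ℝ) := lt_trans one_pos hn1
  have hlogpos : 0 < Real.log n := Real.log_pos hn1
  have hlogne : ((Real.log n : ℝ) : ℂ) ≠ 0 := by exact_mod_cast hlogpos.ne'
  have hcne : (n : ℂ) ≠ 0 := by exact_mod_cast hn0.ne'
  have hlogC : Complex.log (n : ℂ) = ((Real.log n : ℝ) : ℂ) := by
    rw [show ((n:ℕ) : ℂ) = (((n:ℝ)) : ℂ) by push_cast; ring, ← Complex.ofReal_log hn0.le]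
  have hpt : ∀ c : ℝ, (n : ℂ) ^ (-((c : ℂ) + I * t))
      = Complex.exp (-(I * (t:ℂ)) * ((Real.log n : ℝ) : ℂ))
        * Complex.exp ((-((Real.log n : ℝ) : ℂ)) * (c : ℂ)) := by
    intro c
    rw [Complex.cpow_def_of_ne_zero hcne, hlogC, ← Complex.exp_add]
    congr 1
    ring
  simp_rw [hpt]
  rw [intervalIntegral.integral_const_mul, helper_int_exp _ (neg_ne_zero.mpr hlogne)]
  have hexp : Complex.exp (-((Real.log n : ℝ) : ℂ)) = ((n:ℂ))⁻¹ := by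
    rw [← hlogC, Complex.exp_neg, Complex.exp_log hcne]
  have hcp : (n : ℂ) ^ (-(I * (t:ℂ))) = Complex.exp (-(I * (t:ℂ)) * ((Real.log n : ℝ) : ℂ)) := by
    rw [Complex.cpow_def_of_ne_zero hcne, hlogC, mul_comm]
  rw [hexp, hcp]
  have hexpne : Complex.exp (-(I * (t:ℂ)) * ((Real.log n : ℝ) : ℂ)) ≠ 0 := Complex.exp_ne_zero _
  field_simp
  ring


open Complex in
theorem integral_zetaW_critical_strip (N : ℕ) (hN : 0 < N) (t : ℝ) (ht : t ≠ 0) :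
    (∫ c in (0 : ℝ)..1, zetaW N ((c : ℂ) + I * t)) =
      1 + ((N : ℂ) / ((N : ℂ) + 1)) *
          (expIntegralE1 (I * t * (Real.log ((N : ℝ) + 1) : ℂ) - (Real.log ((N : ℝ) + 1) : ℂ))
            - expIntegralE1 (I * t * (Real.log ((N : ℝ) + 1) : ℂ)))
        + ∑ n ∈ Finset.Icc 1 (N - 1),
            (n : ℂ) * ((n : ℂ) + 1) ^ (-(I * t)) /
              (((n : ℂ) + 1) * (Real.log ((n : ℝ) + 1) : ℂ)) := by
  have hN1 : (1:ℝ) ≤ (N:ℝ) := by exact_mod_cast hN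
  set L : ℝ := Real.log ((N:ℝ) + 1) with hLdef
  have hL : 0 < L := Real.log_pos (by linarith)
  have hLne : (L:ℂ) ≠ 0 := by exact_mod_cast hL.ne'
  have hN1ne : ((N:ℂ) + 1) ≠ 0 := Nat.cast_add_one_ne_zero N
  have hsne : ∀ c : ℝ, ((c:ℂ) + I * t) ≠ 1 := by
    intro c h
    have h2 : ((c:ℂ) + I * t).im = t := by simp
    rw [h] at h2
    simp at h2
    exact ht h2.symm
  have hdenne : ∀ c : ℝ, ((c:ℂ) + I * t) - 1 ≠ 0 := fun c => sub_ne_zero.mpr (hsne c)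
  have gcont : ∀ n : ℕ, 1 ≤ n → Continuous fun c : ℝ => (n:ℂ) ^ (-((c:ℂ) + I * t)) := by
    intro n hn
    have hne : (n:ℂ) ≠ 0 := Nat.cast_ne_zero.mpr (by omega)
    exact Continuous.const_cpow ((Complex.continuous_ofReal.add continuous_const).neg) (Or.inl hne)
  have fcont : Continuous fun c : ℝ =>
      (N:ℂ) * ((N:ℂ)+1) ^ (-((c:ℂ) + I*t)) / ((c:ℂ) + I*t - 1) := by
    apply Continuous.div
    · exact continuous_const.mul (Continuous.const_cpow
        ((Complex.continuous_ofReal.add continuous_const).neg) (Or.inl hN1ne))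
    · exact (Complex.continuous_ofReal.add continuous_const).sub continuous_const
    · exact hdenne
  have hsum_cont : Continuous fun c : ℝ => ∑ n ∈ Finset.Icc 1 N, (n:ℂ) ^ (-((c:ℂ)+I*t)) :=
    continuous_finset_sum _ (fun n hn => gcont n (Finset.mem_Icc.mp hn).1)
  have hcongr : (∫ c in (0:ℝ)..1, zetaW N ((c:ℂ) + I * t))
      = (∫ c in (0:ℝ)..1, ((∑ n ∈ Finset.Icc 1 N, (n:ℂ) ^ (-((c:ℂ)+I*t)))
          + (N:ℂ) * ((N:ℂ)+1) ^ (-((c:ℂ)+I*t)) / ((c:ℂ)+I*t-1))) :=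
    intervalIntegral.integral_congr (fun c _ => zetaW_eq N _ (hsne c))
  rw [hcongr, intervalIntegral.integral_add (hsum_cont.intervalIntegrable 0 1)
      (fcont.intervalIntegrable 0 1),
    intervalIntegral.integral_finset_sum
      (fun n hn => ((gcont n (Finset.mem_Icc.mp hn).1).intervalIntegrable 0 1))]
  -- the sum part
  have hIcc : Finset.Icc 1 N = insert 1 (Finset.Icc 2 N) := by
    ext x; simp only [Finset.mem_Icc, Finset.mem_insert]; omega
  have h1notin : (1:ℕ) ∉ Finset.Icc 2 N := by simp
  have hterm1 : (∫ c in (0:ℝ)..1, ((1:ℕ):ℂ) ^ (-((c:ℂ)+I*t))) = 1 := by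
    simp
  have hsum_eq : (∑ n ∈ Finset.Icc 1 N, ∫ c in (0:ℝ)..1, (n:ℂ) ^ (-((c:ℂ)+I*t)))
      = 1 + ∑ m ∈ Finset.Icc 1 (N-1),
          (m:ℂ) * ((m:ℂ)+1) ^ (-(I * (t:ℂ))) / (((m:ℂ)+1) * ((Real.log ((m:ℝ)+1) : ℝ):ℂ)) := by
    rw [hIcc, Finset.sum_insert h1notin, hterm1]
    congr 1
    have hmap : Finset.Icc 2 N = (Finset.Icc 1 (N-1)).map (addRightEmbedding 1) := by
      rw [Finset.map_add_right_Icc]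
      congr 1
      omega
    rw [hmap, Finset.sum_map]
    apply Finset.sum_congr rfl
    intro m hm
    have hm1 : 1 ≤ m := (Finset.mem_Icc.mp hm).1
    show (∫ c in (0:ℝ)..1, ((m+1:ℕ):ℂ) ^ (-((c:ℂ)+I*t))) = _
    rw [termInt (m+1) (by omega) t]
    push_cast
    ring
  -- the E1 part
  have hf : (∫ c in (0:ℝ)..1, (N:ℂ) * ((N:ℂ)+1) ^ (-((c:ℂ)+I*t)) / ((c:ℂ)+I*t-1))
      = ((N:ℂ)/((N:ℂ)+1)) * (expIntegralE1 (I*t*(L:ℂ) - (L:ℂ)) - expIntegralE1 (I*t*(L:ℂ))) := by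
    rw [Ei_diff t L ht hL, ← intervalIntegral.integral_const_mul]
    have hcomp := intervalIntegral.integral_comp_sub_left (a := (0:ℝ)) (b := 1)
      (fun c : ℝ => (N:ℂ) * ((N:ℂ)+1) ^ (-((c:ℂ)+I*t)) / ((c:ℂ)+I*t-1)) 1
    simp only [sub_self, sub_zero] at hcomp
    rw [← hcomp]
    apply intervalIntegral.integral_congr
    intro u _
    have hNexp : ((N:ℂ)+1) = Complex.exp ((L:ℂ)) := by
      rw [show ((N:ℂ)) = (((N:ℝ)):ℂ) from (Complex.ofReal_natCast N).symm,
        ← Complex.ofReal_one, ← Complex.ofReal_add, hLdef, ← Complex.ofReal_exp,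
        Real.exp_log (by linarith)]
    have hlogN : Complex.log ((N:ℂ)+1) = (L:ℂ) := by
      rw [hNexp, Complex.log_exp (by simpa using Real.pi_pos) (by simpa using Real.pi_pos.le)]
    have hcp : ∀ w : ℂ, ((N:ℂ)+1) ^ w = Complex.exp ((L:ℂ) * w) := by
      intro w; rw [Complex.cpow_def_of_ne_zero hN1ne, hlogN]
    show (N:ℂ) * ((N:ℂ)+1) ^ (-((((1-u:ℝ)):ℂ)+I*t)) / ((((1-u:ℝ)):ℂ)+I*t-1)
        = ((N:ℂ)/((N:ℂ)+1)) * ((L:ℂ) * Complex.exp ((u:ℂ)*L - I*t*L) / (I*t*L - (u:ℂ)*L))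
    rw [hcp]
    push_cast
    have hden : I*(t:ℂ) - (u:ℂ) ≠ 0 := by
      intro h
      have h2 : (I*(t:ℂ) - (u:ℂ)).im = t := by simp
      rw [h] at h2
      simp at h2
      exact ht h2.symm
    have he : Complex.exp ((L:ℂ) * (-((1 - (u:ℂ)) + I*t)))
        = Complex.exp ((u:ℂ)*L - I*t*L) * ((N:ℂ)+1)⁻¹ := by
      rw [show (L:ℂ) * (-((1 - (u:ℂ)) + I*t)) = ((u:ℂ)*L - I*t*L) + (-(L:ℂ)) by ring,
        Complex.exp_add, Complex.exp_neg, ← hNexp]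
    have hd1 : ((1:ℂ) - (u:ℂ) + I*(t:ℂ) - 1) ≠ 0 := by
      rw [show ((1:ℂ) - (u:ℂ) + I*(t:ℂ) - 1) = I*(t:ℂ) - (u:ℂ) by ring]
      exact hden
    have hd2 : (L:ℂ) * (I*(t:ℂ) - (u:ℂ)) ≠ 0 := mul_ne_zero hLne hden
    rw [he, show I*(t:ℂ)*L - (u:ℂ)*L = (L:ℂ) * (I*t - u) by ring, div_mul_div_comm,
      div_eq_div_iff hd1 (mul_ne_zero hN1ne hd2)]
    field_simp
    ring
  rw [hsum_eq, hf]
  ring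
end

section
/- For every positive integer N, the quotient of successive reflection functions at s = 1 satisfies lim_{s→1} χ(N+1; s)/χ(N; s) = (N+2)·N·( N+1 − a(N+1) ) / ( (N+1)²·( N − a(N) ) ), where a(N) = Σ_{n=1}^N n·(ln(n+1) − ln(n)) and s ranges over complex numbers at which both χ(N+1; s) and χ(N; s) are defined and nonzero. -/
/-- The reflection function `χ(N; s) = ζ_w(N; 1-s) / ζ_w(N; s)`. -/
noncomputable def chiW (N : ℕ) (s : ℂ) : ℂ := zetaW N (1 - s) / zetaW N s

/-- `a(N) = Σ_{n=1}^N n·(ln(n+1) − ln n)`. -/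
noncomputable def aW (N : ℕ) : ℝ :=
  ∑ n ∈ Finset.Icc 1 N, (n : ℝ) * (Real.log ((n : ℝ) + 1) - Real.log (n : ℝ))

noncomputable def gW (M : ℕ) (s : ℂ) : ℂ :=
  ∑ n ∈ Finset.Icc 1 M,
    ((n : ℂ) * ((n : ℂ) + 1) ^ (-s) - (n : ℂ) ^ ((1 : ℂ) - s) + s * (n : ℂ) ^ (-s))

lemma zetaW_eq_s17 (M : ℕ) (s : ℂ) : zetaW M s = gW M s / (s - 1) := by
  rw [zetaW, gW]; ring

lemma gW_zero (M : ℕ) : gW M 0 = 0 := by simp [gW]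

lemma gW_one (M : ℕ) : gW M 1 = (M : ℂ) / ((M : ℂ) + 1) := by
  induction M with
  | zero => simp [gW]
  | succ M ih =>
    rw [gW, Finset.sum_Icc_succ_top (by omega), ← gW, ih]
    have h1 : ((M:ℂ)+1) ≠ 0 := Nat.cast_add_one_ne_zero M
    have h2 : ((M:ℂ)+1+1) ≠ 0 := by
      have := Nat.cast_add_one_ne_zero (M+1) (R := ℂ); push_cast at this; exact this
    have hc : ∀ x : ℂ, x ^ (-1:ℂ) = x⁻¹ := fun x => by
      rw [Complex.cpow_neg, Complex.cpow_one]
    rw [sub_self, Complex.cpow_zero, hc, hc]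
    push_cast
    field_simp
    ring

lemma gW_one_ne (M : ℕ) (hM : 0 < M) : gW M 1 ≠ 0 := by
  rw [gW_one]
  have h1 : ((M:ℂ)+1) ≠ 0 := Nat.cast_add_one_ne_zero M
  have h0 : (M:ℂ) ≠ 0 := Nat.cast_ne_zero.mpr (by omega)
  exact div_ne_zero h0 h1

lemma hasDerivAt_gW (M : ℕ) :
    HasDerivAt (gW M) ((M : ℂ) - (aW M : ℂ)) 0 := by
  have key : HasDerivAt (gW M)
      (∑ n ∈ Finset.Icc 1 M,
        (1 - (n : ℂ) * ((Real.log ((n:ℝ)+1) : ℝ) - (Real.log (n:ℝ) : ℝ)))) 0 := by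
    apply HasDerivAt.fun_sum
    intro n hn
    have hn1 : 1 ≤ n := (Finset.mem_Icc.mp hn).1
    have hb : (n:ℂ) ≠ 0 := Nat.cast_ne_zero.mpr (by omega)
    have hc : ((n:ℂ)+1) ≠ 0 := by
      have := Nat.cast_add_one_ne_zero n (R := ℂ); exact_mod_cast this
    have hneg : HasDerivAt (fun s : ℂ => -s) (-1) 0 := (hasDerivAt_id 0).neg
    have h1 : HasDerivAt (fun s : ℂ => (n:ℂ) * ((n:ℂ)+1) ^ (-s))
        ((n:ℂ) * (((n:ℂ)+1) ^ (-(0:ℂ)) * Complex.log ((n:ℂ)+1) * (-1))) 0 :=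
      (hneg.const_cpow (Or.inl hc)).const_mul _
    have hsub : HasDerivAt (fun s : ℂ => (1:ℂ) - s) (-1) 0 := by
      simpa using (hasDerivAt_id (0:ℂ)).const_sub 1
    have h2 : HasDerivAt (fun s : ℂ => (n:ℂ) ^ ((1:ℂ) - s))
        ((n:ℂ) ^ ((1:ℂ) - 0) * Complex.log (n:ℂ) * (-1)) 0 :=
      hsub.const_cpow (Or.inl hb)
    have h3' : HasDerivAt (fun s : ℂ => (n:ℂ) ^ (-s))
        ((n:ℂ) ^ (-(0:ℂ)) * Complex.log (n:ℂ) * (-1)) 0 :=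
      hneg.const_cpow (Or.inl hb)
    have h3 : HasDerivAt (fun s : ℂ => s * (n:ℂ) ^ (-s))
        (1 * (n:ℂ) ^ (-(0:ℂ)) + 0 * ((n:ℂ) ^ (-(0:ℂ)) * Complex.log (n:ℂ) * (-1))) 0 :=
      (hasDerivAt_id 0).mul h3'
    have := (h1.fun_sub h2).fun_add h3
    convert this using 1
    have hrn : Complex.log (n:ℂ) = (Real.log (n:ℝ) : ℂ) := by
      rw [Complex.ofReal_log (Nat.cast_nonneg n)]; norm_num
    have hrn1 : Complex.log ((n:ℂ)+1) = (Real.log ((n:ℝ)+1) : ℂ) := by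
      rw [Complex.ofReal_log (by positivity)]
      norm_num
    rw [hrn, hrn1]
    simp [Complex.cpow_zero, Complex.cpow_one, sub_zero]
    ring
  convert key using 1
  rw [Finset.sum_sub_distrib, Finset.sum_const, Nat.card_Icc]
  congr 1
  · simp
  · rw [aW]; push_cast; rfl

lemma aW_lt (M : ℕ) (hM : 0 < M) : aW M < M := by
  have h : ∀ n ∈ Finset.Icc 1 M, (n : ℝ) * (Real.log ((n:ℝ)+1) - Real.log (n:ℝ)) < 1 := by
    intro n hn
    have hn1 : 1 ≤ n := (Finset.mem_Icc.mp hn).1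
    have hnpos : (0:ℝ) < n := by exact_mod_cast hn1
    have hx : (0:ℝ) < ((n:ℝ)+1)/(n:ℝ) := by positivity
    have hx1 : ((n:ℝ)+1)/(n:ℝ) ≠ 1 := by
      intro h
      rw [div_eq_one_iff_eq (ne_of_gt hnpos)] at h
      linarith
    have := Real.log_lt_sub_one_of_pos hx hx1
    rw [Real.log_div (by positivity) (ne_of_gt hnpos)] at this
    have h2 : ((n:ℝ)+1)/(n:ℝ) - 1 = 1/(n:ℝ) := by field_simp; ring
    rw [h2] at this
    calc (n : ℝ) * (Real.log ((n:ℝ)+1) - Real.log (n:ℝ)) < (n:ℝ) * (1/(n:ℝ)) := by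
          exact (mul_lt_mul_iff_right₀ hnpos).mpr this
      _ = 1 := by field_simp
  have hne : (Finset.Icc 1 M).Nonempty := ⟨1, Finset.mem_Icc.mpr ⟨le_refl 1, hM⟩⟩
  calc aW M < ∑ _n ∈ Finset.Icc 1 M, (1:ℝ) := Finset.sum_lt_sum_of_nonempty hne h
    _ = M := by rw [Finset.sum_const, Nat.card_Icc]; simp

lemma dW_ne (M : ℕ) (hM : 0 < M) : (M : ℂ) - (aW M : ℂ) ≠ 0 := by
  have h := aW_lt M hM
  have : ((M : ℝ) - aW M : ℝ) ≠ 0 := ne_of_gt (by linarith)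
  intro hc
  apply this
  have : (((M : ℝ) - aW M : ℝ) : ℂ) = 0 := by push_cast; exact hc
  exact_mod_cast this

lemma continuous_gW (M : ℕ) : Continuous (gW M) := by
  apply continuous_finset_sum
  intro n hn
  have hn1 : 1 ≤ n := (Finset.mem_Icc.mp hn).1
  have hb : (n:ℂ) ≠ 0 := Nat.cast_ne_zero.mpr (by omega)
  have hc : ((n:ℂ)+1) ≠ 0 := by
    have := Nat.cast_add_one_ne_zero n (R := ℂ); exact_mod_cast this
  exact ((continuous_const.mul (continuous_id.neg.const_cpow (Or.inl hc))).sub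
    ((continuous_const.sub continuous_id).const_cpow (Or.inl hb))).add
    (continuous_id.mul (continuous_id.neg.const_cpow (Or.inl hb)))

lemma tendsto_gW_div (M : ℕ) :
    Filter.Tendsto (fun t : ℂ => gW M t / t) (nhdsWithin 0 {(0:ℂ)}ᶜ)
      (nhds ((M : ℂ) - (aW M : ℂ))) := by
  have h := hasDerivAt_iff_tendsto_slope.mp (hasDerivAt_gW M)
  apply h.congr'
  filter_upwards [self_mem_nhdsWithin] with t ht
  simp only [slope, gW_zero, sub_zero, vsub_eq_sub, smul_eq_mul]
  rw [div_eq_inv_mul]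

theorem chiW_successive_quotient_at_one (N : ℕ) (hN : 0 < N) :
    Filter.Tendsto (fun s : ℂ => chiW (N + 1) s / chiW N s)
      (nhdsWithin 1
        {s : ℂ | s ≠ 0 ∧ s ≠ 1 ∧ zetaW N s ≠ 0 ∧ zetaW (N + 1) s ≠ 0 ∧
          zetaW N (1 - s) ≠ 0 ∧ zetaW (N + 1) (1 - s) ≠ 0})
      (nhds (((N : ℂ) + 2) * (N : ℂ) * ((N : ℂ) + 1 - (aW (N + 1) : ℂ)) /
        (((N : ℂ) + 1) ^ 2 * ((N : ℂ) - (aW N : ℂ))))) := by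
  set S : Set ℂ := {s : ℂ | s ≠ 0 ∧ s ≠ 1 ∧ zetaW N s ≠ 0 ∧ zetaW (N + 1) s ≠ 0 ∧
      zetaW N (1 - s) ≠ 0 ∧ zetaW (N + 1) (1 - s) ≠ 0} with hS
  have hdN : (N : ℂ) - (aW N : ℂ) ≠ 0 := dW_ne N hN
  have hdN1 : ((N+1 : ℕ) : ℂ) - (aW (N+1) : ℂ) ≠ 0 := dW_ne (N+1) (by omega)
  -- limit of the ratio at 1-s
  have hmap : Filter.Tendsto (fun s : ℂ => 1 - s) (nhdsWithin 1 S) (nhdsWithin 0 {(0:ℂ)}ᶜ) := by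
    apply tendsto_nhdsWithin_of_tendsto_nhds_of_eventually_within
    · have hcont : Continuous (fun s : ℂ => 1 - s) := by continuity
      have h := hcont.tendsto 1
      norm_num at h
      exact h.mono_left nhdsWithin_le_nhds
    · filter_upwards [self_mem_nhdsWithin] with s hs
      simp only [Set.mem_compl_iff, Set.mem_singleton_iff, sub_eq_zero]
      exact fun h => hs.2.1 h.symm
  have hratio0 : Filter.Tendsto (fun t : ℂ => gW (N+1) t / gW N t) (nhdsWithin 0 {(0:ℂ)}ᶜ)
      (nhds ((((N+1:ℕ) : ℂ) - (aW (N+1) : ℂ)) / ((N : ℂ) - (aW N : ℂ)))) := by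
    have h := (tendsto_gW_div (N+1)).div (tendsto_gW_div N) hdN
    apply h.congr'
    filter_upwards [self_mem_nhdsWithin] with t ht
    have ht0 : t ≠ 0 := ht
    simp only [Pi.div_apply]
    rw [div_div_div_comm, div_self ht0, div_one]
  have h1 : Filter.Tendsto (fun s : ℂ => gW (N+1) (1-s) / gW N (1-s)) (nhdsWithin 1 S)
      (nhds ((((N+1:ℕ) : ℂ) - (aW (N+1) : ℂ)) / ((N : ℂ) - (aW N : ℂ)))) :=
    hratio0.comp hmap
  have h2 : Filter.Tendsto (fun s : ℂ => gW N s / gW (N+1) s) (nhdsWithin 1 S)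
      (nhds (gW N 1 / gW (N+1) 1)) := by
    have : Filter.Tendsto (fun s : ℂ => gW N s / gW (N+1) s) (nhds 1)
        (nhds (gW N 1 / gW (N+1) 1)) :=
      ((continuous_gW N).tendsto 1).div ((continuous_gW (N+1)).tendsto 1)
        (gW_one_ne (N+1) (by omega))
    exact this.mono_left nhdsWithin_le_nhds
  have hmul := h1.mul h2
  have heq : ∀ᶠ s in nhdsWithin 1 S,
      (fun s : ℂ => gW (N+1) (1-s) / gW N (1-s) * (gW N s / gW (N+1) s)) s
        = chiW (N+1) s / chiW N s := by
    filter_upwards [self_mem_nhdsWithin] with s hs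
    obtain ⟨hs0, hs1, hzN, hzN1, hzN', hzN1'⟩ := hs
    rw [zetaW_eq_s17] at hzN hzN1 hzN' hzN1'
    have hs1' : s - 1 ≠ 0 := sub_ne_zero.mpr hs1
    have hs0' : (1 - s) - 1 ≠ 0 := by
      intro h; apply hs0; linear_combination -h
    have hgN : gW N s ≠ 0 := fun h => hzN (by rw [h, zero_div])
    have hgN1 : gW (N+1) s ≠ 0 := fun h => hzN1 (by rw [h, zero_div])
    have hgN' : gW N (1-s) ≠ 0 := fun h => hzN' (by rw [h, zero_div])
    have hgN1' : gW (N+1) (1-s) ≠ 0 := fun h => hzN1' (by rw [h, zero_div])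
    rw [chiW, chiW, zetaW_eq_s17, zetaW_eq_s17, zetaW_eq_s17, zetaW_eq_s17]
    field_simp
  have hfinal := hmul.congr' heq
  convert hfinal using 2
  rw [gW_one, gW_one]
  have e1 : ((N:ℂ)+1) ≠ 0 := Nat.cast_add_one_ne_zero N
  have e2 : ((N+1:ℕ):ℂ) ≠ 0 := Nat.cast_ne_zero.mpr (by omega)
  have e3 : ((N+1:ℕ):ℂ)+1 ≠ 0 := Nat.cast_add_one_ne_zero (N+1)
  push_cast
  push_cast at hdN1
  field_simp
  ring
end
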